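/- Let d : ℝ → ℝ be any function, let n, m, k be positive integers, let f : Ω₁ → ℝ^m be Fréchet differentiable on a nonempty open set Ω₁ ⊆ ℝ^n with f(Ω₁) open, and let g : Ω₂ → ℝ^k be Fréchet differentiable on a nonempty open set Ω₂ ⊆ ℝ^m. If d is a derivation with respect to f and with respect to g ∘ f (on {x ∈ Ω₁ : f(x) ∈ Ω₂}), then d is a derivation with respect to g on the set f(Ω₁) ∩ Ω₂, i.e., d(g(y)) = g'(y) d(y) holds for all y ∈ f(Ω₁) ∩ Ω₂. -/

import Mathlib

/-- If `d` is a derivation with respect to `f` (whose image is open) and with respect to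
`g ∘ f`, then `d` is a derivation with respect to `g` on `f(Ω₁) ∩ Ω₂`. -/
theorem stmt_1 (d : ℝ → ℝ) (n m k : ℕ) (hn : 0 < n) (hm : 0 < m) (hk : 0 < k)
    (Ω₁ : Set (Fin n → ℝ)) (Ω₂ : Set (Fin m → ℝ))
    (hΩ₁open : IsOpen Ω₁) (hΩ₁ne : Ω₁.Nonempty)
    (hΩ₂open : IsOpen Ω₂) (hΩ₂ne : Ω₂.Nonempty)
    (f : (Fin n → ℝ) → Fin m → ℝ) (g : (Fin m → ℝ) → Fin k → ℝ)
    (hf : ∀ x ∈ Ω₁, DifferentiableAt ℝ f x)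
    (hg : ∀ y ∈ Ω₂, DifferentiableAt ℝ g y)
    (hfΩ₁ : IsOpen (f '' Ω₁))
    (hdf : ∀ x ∈ Ω₁, (fun j => d (f x j)) = fderiv ℝ f x (fun i => d (x i)))
    (hdgf : ∀ x ∈ Ω₁, f x ∈ Ω₂ →
      (fun j => d (g (f x) j)) = fderiv ℝ (g ∘ f) x (fun i => d (x i))) :
    ∀ y ∈ f '' Ω₁ ∩ Ω₂,
      (fun j => d (g y j)) = fderiv ℝ g y (fun i => d (y i)) := by
  rintro y ⟨⟨x, hx, rfl⟩, hy⟩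
  rw [hdgf x hx hy, fderiv_comp (x := x) (hg _ hy) (hf x hx)]
  simp only [ContinuousLinearMap.comp_apply]
  rw [← hdf x hx]
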